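/- arXiv:1205.2515 — 2 statements merged into one kernel-verified Lean document; each statement's English description precedes it below -/
import Mathlib

section
/- Let Y be a random vector in ℝ^q and let ‖·‖ be a norm on ℝ^q. Then for every p > 0, the minimum over unit vectors z (in the Euclidean norm) of (E|⟨z,Y⟩|^p)^{1/p} is at most (E‖Y‖^p)^{1/p} / E‖Y‖ · E|Y|, provided E‖Y‖ > 0. -/
open MeasureTheory ProbabilityTheory Real
open scoped ENNReal NNReal BigOperators RealInnerProductSpace Pointwise

noncomputable def stdGaussian (n : ℕ) : Measure (EuclideanSpace ℝ (Fin n)) :=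
  (Measure.pi fun _ : Fin n => gaussianReal 0 1).map
    (MeasurableEquiv.toLp 2 (Fin n → ℝ))

/-- A measure on a real vector space is log-concave if
`μ((1-θ)A + θB) ≥ μ(A)^(1-θ) μ(B)^θ` for all compact `A, B` and `θ ∈ (0,1)`. -/
def IsLogConcaveMeasure {E : Type*} [AddCommGroup E] [Module ℝ E]
    [TopologicalSpace E] [MeasurableSpace E] (μ : Measure E) : Prop :=
  ∀ A B : Set E, IsCompact A → IsCompact B → ∀ θ : ℝ, 0 < θ → θ < 1 →
    μ A ^ (1 - θ) * μ B ^ θ ≤ μ ((1 - θ) • A + θ • B)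
private lemma normAux {q : ℕ} (hq : 0 < q)
    (N : EuclideanSpace ℝ (Fin q) → ℝ)
    (hN0 : ∀ t, 0 ≤ N t) (hNdef : ∀ t, N t = 0 → t = 0)
    (hNhom : ∀ (c : ℝ) (t), N (c • t) = |c| * N t)
    (hNadd : ∀ s t, N (s + t) ≤ N s + N t) :
    ∃ v₀ : EuclideanSpace ℝ (Fin q), ‖v₀‖ = 1 ∧ 0 < N v₀ ∧
      (∀ t, N t ≤ N v₀ * ‖t‖) ∧ (∀ t, |⟪v₀, t⟫| ≤ N t / N v₀) := by
  have hN00 : N 0 = 0 := by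
    have := hNhom 0 0
    simpa using this
  -- coordinate bound
  have hcoord : ∀ (t : EuclideanSpace ℝ (Fin q)) (i : Fin q), |t i| ≤ ‖t‖ := by
    intro t i
    have h := abs_real_inner_le_norm (EuclideanSpace.single i (1 : ℝ)) t
    simpa [EuclideanSpace.inner_single_left, EuclideanSpace.norm_single] using h
  -- N is Lipschitz, hence continuous
  set C : ℝ := ∑ i : Fin q, N (EuclideanSpace.single i (1 : ℝ)) with hC
  have hNC : ∀ t : EuclideanSpace ℝ (Fin q), N t ≤ C * ‖t‖ := by
    intro t
    have hdec : t = ∑ i : Fin q, (t i) • EuclideanSpace.single i (1 : ℝ) := by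
      apply PiLp.ext
      intro j
      rw [WithLp.ofLp_sum, Finset.sum_apply]
      simp [EuclideanSpace.single_apply]
    have hsum : N t ≤ ∑ i : Fin q, |t i| * N (EuclideanSpace.single i (1 : ℝ)) := by
      conv_lhs => rw [hdec]
      refine le_trans (Finset.le_sum_of_subadditive N hN00.le hNadd _ _) ?_
      refine le_of_eq (Finset.sum_congr rfl fun i _ => ?_)
      rw [hNhom]
    refine hsum.trans ?_
    rw [hC, Finset.sum_mul]
    refine Finset.sum_le_sum fun i _ => ?_
    exact le_trans (mul_le_mul_of_nonneg_right (hcoord t i) (hN0 _)) (le_of_eq (mul_comm _ _))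
  have hNcont : Continuous N := by
    have hlip : LipschitzWith (Real.toNNReal C) N := by
      refine LipschitzWith.of_dist_le_mul fun s t => ?_
      have h1 : N s ≤ N t + N (s - t) := by
        have := hNadd (s - t) t
        simpa [sub_add_cancel, add_comm] using this
      have h2 : N t ≤ N s + N (s - t) := by
        have h3 := hNadd (t - s) s
        have h4 : N (t - s) = N (s - t) := by
          have := hNhom (-1) (s - t)
          simpa [neg_sub] using this
        simpa [sub_add_cancel, h4, add_comm] using h3
      have habs : |N s - N t| ≤ N (s - t) := abs_sub_le_iff.2 ⟨by linarith, by linarith⟩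
      have hCnn : C ≤ Real.toNNReal C := Real.le_coe_toNNReal C
      have := (habs.trans (hNC (s - t))).trans
        (mul_le_mul_of_nonneg_right hCnn (norm_nonneg _))
      simpa [Real.dist_eq, dist_eq_norm] using this
    exact hlip.continuous
  -- maximize N on the sphere
  obtain ⟨z₁, hz₁⟩ : ∃ z : EuclideanSpace ℝ (Fin q), ‖z‖ = 1 :=
    ⟨EuclideanSpace.single ⟨0, hq⟩ (1 : ℝ), by simp [EuclideanSpace.norm_single]⟩
  have hcpt : IsCompact (Metric.sphere (0 : EuclideanSpace ℝ (Fin q)) 1) :=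
    isCompact_sphere 0 1
  obtain ⟨v₀, hv₀mem, hv₀max⟩ :=
    hcpt.exists_isMaxOn ⟨z₁, by simpa using hz₁⟩ hNcont.continuousOn
  have hv₀ : ‖v₀‖ = 1 := by simpa using hv₀mem
  set b : ℝ := N v₀ with hbdef
  have hb : 0 < b := by
    rcases (hN0 v₀).lt_or_eq with h | h
    · exact h
    · exfalso
      have : v₀ = 0 := hNdef v₀ h.symm
      rw [this] at hv₀; simp at hv₀
  -- N t ≤ b * ‖t‖
  have hNb : ∀ t : EuclideanSpace ℝ (Fin q), N t ≤ b * ‖t‖ := by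
    intro t
    rcases eq_or_ne t 0 with rfl | ht
    · simp [hN00]
    · have htn : (0 : ℝ) < ‖t‖ := norm_pos_iff.2 ht
      have hu : ‖(‖t‖⁻¹ • t : EuclideanSpace ℝ (Fin q))‖ = 1 := by
        rw [norm_smul, Real.norm_eq_abs, abs_of_pos (inv_pos.2 htn)]
        field_simp
      have hle : N (‖t‖⁻¹ • t) ≤ b := hv₀max (by simpa using hu)
      have : N t = ‖t‖ * N (‖t‖⁻¹ • t) := by
        rw [hNhom, abs_of_pos (inv_pos.2 htn)]
        field_simp
      rw [this, mul_comm b ‖t‖]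
      exact mul_le_mul_of_nonneg_left hle htn.le
  -- key first-order inequality
  have hkey : ∀ t : EuclideanSpace ℝ (Fin q), b * ⟪v₀, t⟫ ≤ N t := by
    intro t
    rcases le_or_gt (⟪v₀, t⟫ : ℝ) 0 with hc | hc
    · exact le_trans (mul_nonpos_of_nonneg_of_nonpos hb.le hc) (hN0 t)
    · by_contra hcon
      push_neg at hcon
      set c : ℝ := ⟪v₀, t⟫ with hcdef
      set K : ℝ := b * ‖t‖ ^ 2 / 2 with hKdef
      have hK0 : 0 ≤ K := by positivity
      set ε : ℝ := min ((b * c - N t) / (K + 1)) (1 / c) with hεdef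
      have hε0 : 0 < ε := lt_min (div_pos (by linarith) (by linarith)) (by positivity)
      have hεc : ε * c ≤ 1 := by
        have : ε ≤ 1 / c := min_le_right _ _
        rw [le_div_iff₀ hc] at this
        linarith
      -- main estimate: b * c ≤ N t + ε * K
      have hmain : b * c ≤ N t + ε * K := by
        set w : EuclideanSpace ℝ (Fin q) := v₀ - ε • t with hw
        have hwinner : ‖w‖ ^ 2 = 1 - 2 * (ε * c) + ε ^ 2 * ‖t‖ ^ 2 := by
          have h1 : ⟪v₀, (ε • t : EuclideanSpace ℝ (Fin q))⟫ = ε * c := by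
            rw [real_inner_smul_right]
          have h2 : ‖(ε • t : EuclideanSpace ℝ (Fin q))‖ = ε * ‖t‖ := by
            rw [norm_smul, Real.norm_eq_abs, abs_of_pos hε0]
          rw [hw, @norm_sub_sq_real, h1, h2, hv₀]
          ring
        have hD : (0 : ℝ) ≤ 1 - ε * c + ε ^ 2 * ‖t‖ ^ 2 / 2 := by nlinarith
        have hwle : ‖w‖ ≤ 1 - ε * c + ε ^ 2 * ‖t‖ ^ 2 / 2 := by
          nlinarith [norm_nonneg w, sq_nonneg (ε * c - ε ^ 2 * ‖t‖ ^ 2 / 2)]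
        have h1 : b ≤ N w + ε * N t := by
          have hvw : v₀ = w + ε • t := by rw [hw]; abel
          calc b = N (w + ε • t) := by rw [← hvw]
            _ ≤ N w + N (ε • t) := hNadd _ _
            _ = N w + ε * N t := by rw [hNhom, abs_of_pos hε0]
        have h2 : N w ≤ b * ‖w‖ := hNb w
        have h3 : b * ‖w‖ ≤ b * (1 - ε * c + ε ^ 2 * ‖t‖ ^ 2 / 2) :=
          mul_le_mul_of_nonneg_left hwle hb.le
        -- b ≤ b(1 - εc + ε²‖t‖²/2) + ε N t, divide by ε
        rw [hKdef]
        nlinarith [hε0, mul_pos hε0 hε0]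
      have hε2 : ε * (K + 1) ≤ b * c - N t := by
        have := min_le_left ((b * c - N t) / (K + 1)) (1 / c)
        rw [← hεdef] at this
        rw [← le_div_iff₀ (by linarith : (0:ℝ) < K + 1)]
        exact this
      nlinarith
  -- hence |⟪v₀, t⟫| * b ≤ N t
  have hkey' : ∀ t : EuclideanSpace ℝ (Fin q), |⟪v₀, t⟫| ≤ N t / b := by
    intro t
    rw [le_div_iff₀ hb]
    have h2 := hkey (-t)
    have h3 : N (-t) = N t := by
      have := hNhom (-1) t
      simpa using this
    rw [inner_neg_right, h3] at h2
    rcases abs_cases (⟪v₀, t⟫ : ℝ) with ⟨h, _⟩ | ⟨h, _⟩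
    · rw [h, mul_comm]; exact hkey t
    · rw [h, mul_comm]; exact h2
  exact ⟨v₀, hv₀, hb, hNb, hkey'⟩

/-- Lemma 2.1: for any norm N on ℝ^q,
min over the Euclidean unit sphere of (E|⟨z,Y⟩|^p)^{1/p} is at most
(E N(Y)^p)^{1/p} / E N(Y) · E|Y|. -/
theorem stmt0 {q : ℕ} {Ω : Type*} [MeasurableSpace Ω] (P : Measure Ω) [IsProbabilityMeasure P]
    (Y : Ω → EuclideanSpace ℝ (Fin q)) (hY : Measurable Y)
    (N : EuclideanSpace ℝ (Fin q) → ℝ)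
    (hN0 : ∀ t, 0 ≤ N t) (hNdef : ∀ t, N t = 0 → t = 0)
    (hNhom : ∀ (c : ℝ) (t), N (c • t) = |c| * N t)
    (hNadd : ∀ s t, N (s + t) ≤ N s + N t)
    (p : ℝ) (hp : 0 < p)
    (hint1 : Integrable (fun ω => N (Y ω) ^ p) P)
    (hint1' : Integrable (fun ω => N (Y ω)) P)
    (hint2 : Integrable (fun ω => ‖Y ω‖) P)
    (hpos : 0 < ∫ ω, N (Y ω) ∂P) :
    (⨅ z : {z : EuclideanSpace ℝ (Fin q) // ‖z‖ = 1},
        (∫ ω, |⟪z.1, Y ω⟫| ^ p ∂P) ^ (1 / p)) ≤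
      (∫ ω, N (Y ω) ^ p ∂P) ^ (1 / p) / (∫ ω, N (Y ω) ∂P) * ∫ ω, ‖Y ω‖ ∂P := by
  have hN00 : N 0 = 0 := by
    have := hNhom 0 0
    simpa using this
  -- q = 0 is contradictory
  rcases Nat.eq_zero_or_pos q with hq | hq
  · subst hq
    have hz : ∀ ω, N (Y ω) = 0 := by
      intro ω
      have : Y ω = 0 := Subsingleton.elim _ _
      rw [this, hN00]
    exact absurd hpos (by simp [hz])
  obtain ⟨v₀, hv₀, hb, hNb, hkey'⟩ := normAux hq N hN0 hNdef hNhom hNadd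
  set b : ℝ := N v₀ with hbdef
  -- bound the integral at v₀
  set A : ℝ := ∫ ω, N (Y ω) ^ p ∂P with hA
  set B : ℝ := ∫ ω, N (Y ω) ∂P with hB
  set Cn : ℝ := ∫ ω, ‖Y ω‖ ∂P with hCn
  have hA0 : 0 ≤ A := integral_nonneg fun ω => Real.rpow_nonneg (hN0 _) p
  have hCn0 : 0 ≤ Cn := integral_nonneg fun ω => norm_nonneg _
  have hBC : B ≤ b * Cn := by
    rw [hB, hCn, ← integral_const_mul]
    exact integral_mono hint1' (hint2.const_mul b) fun ω => hNb (Y ω)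
  have hptw : ∀ ω, |⟪v₀, Y ω⟫| ^ p ≤ N (Y ω) ^ p / b ^ p := by
    intro ω
    calc |⟪v₀, Y ω⟫| ^ p ≤ (N (Y ω) / b) ^ p :=
          Real.rpow_le_rpow (abs_nonneg _) (hkey' (Y ω)) hp.le
      _ = N (Y ω) ^ p / b ^ p := Real.div_rpow (hN0 _) hb.le p
  have hIle : (∫ ω, |⟪v₀, Y ω⟫| ^ p ∂P) ≤ A / b ^ p := by
    have hgint : Integrable (fun ω => N (Y ω) ^ p / b ^ p) P := hint1.div_const _
    calc (∫ ω, |⟪v₀, Y ω⟫| ^ p ∂P)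
        ≤ ∫ ω, N (Y ω) ^ p / b ^ p ∂P :=
          integral_mono_of_nonneg
            (ae_of_all _ fun ω => Real.rpow_nonneg (abs_nonneg _) p)
            hgint (ae_of_all _ hptw)
      _ = A / b ^ p := by rw [hA, integral_div]
  -- infimum is at most the value at v₀
  have hbdd : BddBelow (Set.range fun z : {z : EuclideanSpace ℝ (Fin q) // ‖z‖ = 1} =>
      (∫ ω, |⟪z.1, Y ω⟫| ^ p ∂P) ^ (1 / p)) := by
    refine ⟨0, ?_⟩
    rintro x ⟨z, rfl⟩
    exact Real.rpow_nonneg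
      (integral_nonneg fun ω => Real.rpow_nonneg (abs_nonneg _) p) _
  refine le_trans (ciInf_le hbdd ⟨v₀, hv₀⟩) ?_
  have hInn0 : (0:ℝ) ≤ ∫ ω, |⟪v₀, Y ω⟫| ^ p ∂P :=
    integral_nonneg fun ω => Real.rpow_nonneg (abs_nonneg _) p
  have step1 : (∫ ω, |⟪v₀, Y ω⟫| ^ p ∂P) ^ (1 / p) ≤ A ^ (1 / p) / b := by
    have h1 : (∫ ω, |⟪v₀, Y ω⟫| ^ p ∂P) ^ (1 / p) ≤ (A / b ^ p) ^ (1 / p) :=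
      Real.rpow_le_rpow hInn0 hIle (by positivity)
    have h2 : (A / b ^ p) ^ (1 / p) = A ^ (1 / p) / b := by
      rw [Real.div_rpow hA0 (Real.rpow_nonneg hb.le p) (1 / p), ← Real.rpow_mul hb.le,
        mul_one_div, div_self hp.ne', Real.rpow_one]
    rw [← h2]; exact h1
  refine step1.trans ?_
  -- A^{1/p}/b ≤ A^{1/p}/B * Cn
  have hArp : 0 ≤ A ^ (1 / p) := Real.rpow_nonneg hA0 _
  rw [div_mul_eq_mul_div, div_le_div_iff₀ hb hpos]
  nlinarith [mul_le_mul_of_nonneg_left hBC hArp]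
end

section
/- Let g : ℝ^q → [0,∞) be an even log-concave probability density with g(0) = max g. Define K = {t ∈ ℝ^q : g(t) ≥ 25^{-q} g(0)}. Then K is a symmetric convex set with nonempty interior, and if Y has density g and ‖·‖_K denotes the gauge (Minkowski functional) of K, then P(‖Y‖_K ≤ 1/50) ≤ 2^{-q}. -/
open MeasureTheory ProbabilityTheory Real
open scoped ENNReal NNReal BigOperators RealInnerProductSpace Pointwise

/-- For an even log-concave probability density g with max at 0,
K = {t : g(t) ≥ 25^{-q} g(0)} is symmetric convex with nonempty interior and
P(gauge_K(Y) ≤ 1/50) ≤ 2^{-q} when Y has density g. -/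
theorem stmt2 {q : ℕ} (g : EuclideanSpace ℝ (Fin q) → ℝ)
    (hg0 : ∀ t, 0 ≤ g t) (hgeven : ∀ t, g (-t) = g t) (hgmeas : Measurable g)
    (hglc : ∀ x y : EuclideanSpace ℝ (Fin q), ∀ θ : ℝ, 0 ≤ θ → θ ≤ 1 →
      g x ^ (1 - θ) * g y ^ θ ≤ g ((1 - θ) • x + θ • y))
    (hgint : ∫ t, g t = 1)
    (hgmax : ∀ t, g t ≤ g 0)
    (K : Set (EuclideanSpace ℝ (Fin q)))
    (hK : K = {t | g 0 / 25 ^ q ≤ g t})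
    {Ω : Type*} [MeasurableSpace Ω] (P : Measure Ω) [IsProbabilityMeasure P]
    (Y : Ω → EuclideanSpace ℝ (Fin q)) (hY : Measurable Y)
    (hlaw : Measure.map Y P = volume.withDensity fun t => ENNReal.ofReal (g t)) :
    Convex ℝ K ∧ K = -K ∧ (interior K).Nonempty ∧
      P {ω | gauge K (Y ω) ≤ 1 / 50} ≤ 2⁻¹ ^ q := by
  subst hK
  -- dimension 0 : everything is trivial
  rcases eq_or_ne q 0 with rfl | hqne
  · haveI : Subsingleton (EuclideanSpace ℝ (Fin 0)) :=
      ⟨fun a b => by ext i; exact Fin.elim0 i⟩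
    have hKuniv : {t : EuclideanSpace ℝ (Fin 0) | g 0 / 25 ^ 0 ≤ g t} = Set.univ := by
      ext t
      simp [Subsingleton.elim t 0]
    rw [hKuniv]
    refine ⟨convex_univ, by simp, by simp, ?_⟩
    simpa using prob_le_one
  have hq1 : 1 ≤ q := Nat.one_le_iff_ne_zero.2 hqne
  -- g 0 > 0
  have hc : 0 < g 0 := by
    by_contra h
    push_neg at h
    have hz : ∀ t, g t = 0 := fun t => le_antisymm ((hgmax t).trans h) (hg0 t)
    rw [show (fun t : EuclideanSpace ℝ (Fin q) => g t) = fun _ => (0 : ℝ) from funext hz]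
      at hgint
    simp at hgint
  have h25 : (0:ℝ) < 25 ^ q := by positivity
  have hc25 : (0:ℝ) < g 0 / 25 ^ q := div_pos hc h25
  -- convexity
  have hconv : Convex ℝ {t : EuclideanSpace ℝ (Fin q) | g 0 / 25 ^ q ≤ g t} := by
    intro x hx y hy a b ha hb hab
    have h1b : 1 - b = a := by linarith
    have hlc := hglc x y b hb (by linarith)
    rw [h1b] at hlc
    have hxy : g 0 / 25 ^ q ≤ g x ^ a * g y ^ b := by
      calc g 0 / 25 ^ q = (g 0 / 25 ^ q) ^ a * (g 0 / 25 ^ q) ^ b := by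
            rw [← Real.rpow_add hc25, hab, Real.rpow_one]
        _ ≤ g x ^ a * g y ^ b := by
            apply mul_le_mul (Real.rpow_le_rpow hc25.le hx ha)
              (Real.rpow_le_rpow hc25.le hy hb)
              (Real.rpow_nonneg hc25.le b) (Real.rpow_nonneg (hg0 x) a)
    exact hxy.trans hlc
  -- symmetry
  have hsym : {t : EuclideanSpace ℝ (Fin q) | g 0 / 25 ^ q ≤ g t}
      = -{t : EuclideanSpace ℝ (Fin q) | g 0 / 25 ^ q ≤ g t} := by
    ext t
    simp only [Set.mem_neg, Set.mem_setOf_eq]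
    rw [hgeven t]
  -- 0 ∈ K
  have h0K : (0:EuclideanSpace ℝ (Fin q)) ∈
      {t : EuclideanSpace ℝ (Fin q) | g 0 / 25 ^ q ≤ g t} := by
    have h1 : (1:ℝ) ≤ 25 ^ q := one_le_pow₀ (by norm_num)
    simpa using div_le_self hc.le h1
  have hKmeas : MeasurableSet {t : EuclideanSpace ℝ (Fin q) | g 0 / 25 ^ q ≤ g t} :=
    hgmeas measurableSet_Ici
  -- integrability and lintegral = 1
  have hgint' : Integrable g := by
    by_contra h
    rw [integral_undef h] at hgint
    norm_num at hgint
  have hlint : ∫⁻ t, ENNReal.ofReal (g t) = 1 := by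
    rw [← ofReal_integral_eq_lintegral_ofReal hgint' (Filter.Eventually.of_forall hg0), hgint,
      ENNReal.ofReal_one]
  -- positive measure of K
  have hvol : 0 < volume {t : EuclideanSpace ℝ (Fin q) | g 0 / 25 ^ q ≤ g t} := by
    have hpos : 0 < volume {t : EuclideanSpace ℝ (Fin q) | 0 < g t} := by
      by_contra h
      rw [not_lt, nonpos_iff_eq_zero] at h
      have hae : (fun t : EuclideanSpace ℝ (Fin q) => ENNReal.ofReal (g t))
          =ᵐ[volume] (fun _ => (0:ℝ≥0∞)) := by
        refine Filter.eventuallyEq_of_mem (s := {t : EuclideanSpace ℝ (Fin q) | 0 < g t}ᶜ) ?_ ?_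
        · rwa [mem_ae_iff, compl_compl]
        · intro t ht
          simp only [Set.mem_compl_iff, Set.mem_setOf_eq, not_lt] at ht
          simp [ENNReal.ofReal_eq_zero.2 ht]
      rw [lintegral_congr_ae hae, lintegral_const, zero_mul] at hlint
      exact zero_ne_one hlint
    have hsub : {t : EuclideanSpace ℝ (Fin q) | 0 < g t}
        ⊆ ⋃ n : ℕ, {t : EuclideanSpace ℝ (Fin q) | ((n:ℝ)+1)⁻¹ ≤ g t} := by
      intro t ht
      obtain ⟨n, hn⟩ := exists_nat_one_div_lt (show 0 < g t from ht)
      exact Set.mem_iUnion.2 ⟨n, by simpa [one_div] using hn.le⟩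
    obtain ⟨n, hn⟩ : ∃ n : ℕ,
        0 < volume {t : EuclideanSpace ℝ (Fin q) | ((n:ℝ)+1)⁻¹ ≤ g t} := by
      by_contra h
      push_neg at h
      simp only [nonpos_iff_eq_zero] at h
      exact hpos.ne' (measure_mono_null hsub (measure_iUnion_null h))
    set ε : ℝ := ((n:ℝ)+1)⁻¹ with hεdef
    have hε : 0 < ε := by positivity
    obtain ⟨t0, ht0⟩ : {t : EuclideanSpace ℝ (Fin q) | ε ≤ g t}.Nonempty :=
      nonempty_of_measure_ne_zero hn.ne'
    have hεc : ε ≤ g 0 := le_trans ht0 (hgmax t0)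
    obtain ⟨m, hm⟩ := pow_unbounded_of_one_lt (g 0 / ε) (by norm_num : (1:ℝ) < 25)
    set lam : ℝ := (((m+1:ℕ):ℝ))⁻¹ with hlamdef
    have hm1 : (0:ℝ) < ((m+1:ℕ):ℝ) := by positivity
    have hlam0 : 0 < lam := by positivity
    have hlam1 : lam ≤ 1 := by
      rw [hlamdef, inv_le_one_iff₀]
      right
      exact_mod_cast Nat.one_le_iff_ne_zero.2 (Nat.succ_ne_zero m)
    have hdiv : (0:ℝ) < g 0 / ε := div_pos hc hε
    -- (g0/ε)^lam ≤ 25^q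
    have hle25 : (g 0 / ε) ^ lam ≤ 25 ^ q := by
      have h1 : (g 0 / ε) ^ lam ≤ ((25:ℝ) ^ (m+1:ℕ)) ^ lam := by
        apply Real.rpow_le_rpow hdiv.le _ hlam0.le
        exact hm.le.trans (pow_le_pow_right₀ (by norm_num) (Nat.le_succ m))
      have h2 : ((25:ℝ) ^ (m+1:ℕ)) ^ lam = 25 := by
        rw [← Real.rpow_natCast 25 (m+1), ← Real.rpow_mul (by norm_num), hlamdef,
          mul_inv_cancel₀ hm1.ne', Real.rpow_one]
      rw [h2] at h1
      exact h1.trans (le_self_pow₀ (by norm_num) hqne)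
    -- lam • S ⊆ K
    have hsubK : lam • {t : EuclideanSpace ℝ (Fin q) | ε ≤ g t}
        ⊆ {t : EuclideanSpace ℝ (Fin q) | g 0 / 25 ^ q ≤ g t} := by
      rintro _ ⟨s, hs, rfl⟩
      have hlc := hglc 0 s lam hlam0.le hlam1
      rw [smul_zero, zero_add] at hlc
      have heq : g 0 ^ (1 - lam) * ε ^ lam = g 0 * ((g 0 / ε) ^ lam)⁻¹ := by
        rw [← Real.inv_rpow hdiv.le, inv_div, Real.div_rpow hε.le hc.le,
          Real.rpow_sub hc, Real.rpow_one]
        ring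
      have hlow : g 0 / 25 ^ q ≤ g 0 ^ (1 - lam) * g s ^ lam := by
        have hgs : ε ^ lam ≤ g s ^ lam := Real.rpow_le_rpow hε.le hs hlam0.le
        have hinv : ((25:ℝ) ^ q)⁻¹ ≤ ((g 0 / ε) ^ lam)⁻¹ := by
          apply inv_anti₀ (Real.rpow_pos_of_pos hdiv lam) hle25
        have key : g 0 / 25 ^ q ≤ g 0 ^ (1 - lam) * ε ^ lam := by
          rw [heq, div_eq_mul_inv]
          exact mul_le_mul_of_nonneg_left hinv hc.le
        refine key.trans ?_
        exact mul_le_mul_of_nonneg_left hgs (Real.rpow_nonneg hc.le _)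
      exact hlow.trans hlc
    calc (0:ℝ≥0∞) < ENNReal.ofReal (lam ^ q) * volume {t : EuclideanSpace ℝ (Fin q) | ε ≤ g t} := by
          refine ENNReal.mul_pos ?_ hn.ne'
          simp only [ne_eq, ENNReal.ofReal_eq_zero, not_le]
          positivity
      _ = volume (lam • {t : EuclideanSpace ℝ (Fin q) | ε ≤ g t}) := by
          rw [Measure.addHaar_smul_of_nonneg volume hlam0.le, finrank_euclideanSpace_fin]
      _ ≤ volume {t : EuclideanSpace ℝ (Fin q) | g 0 / 25 ^ q ≤ g t} := measure_mono hsubK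
  -- nonempty interior
  have hint : (interior {t : EuclideanSpace ℝ (Fin q) | g 0 / 25 ^ q ≤ g t}).Nonempty := by
    rw [hconv.interior_nonempty_iff_affineSpan_eq_top]
    by_contra h
    have hz := Measure.addHaar_affineSubspace volume
      (affineSpan ℝ {t : EuclideanSpace ℝ (Fin q) | g 0 / 25 ^ q ≤ g t}) h
    exact hvol.ne' (measure_mono_null (subset_affineSpan ℝ _) hz)
  refine ⟨hconv, hsym, hint, ?_⟩
  -- 0 is in the interior, so K is absorbent
  obtain ⟨x, hx⟩ := hint
  have hnegx : -x ∈ interior {t : EuclideanSpace ℝ (Fin q) | g 0 / 25 ^ q ≤ g t} := by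
    have hKneg : (-1:ℝ) • {t : EuclideanSpace ℝ (Fin q) | g 0 / 25 ^ q ≤ g t}
        = {t : EuclideanSpace ℝ (Fin q) | g 0 / 25 ^ q ≤ g t} := by
      rw [Set.neg_smul_set, one_smul, ← hsym]
    have hx2 : (-1:ℝ) • x
        ∈ (-1:ℝ) • interior {t : EuclideanSpace ℝ (Fin q) | g 0 / 25 ^ q ≤ g t} :=
      Set.smul_mem_smul_set hx
    rw [← interior_smul₀ (by norm_num : (-1:ℝ) ≠ 0), hKneg] at hx2
    simpa [neg_one_smul] using hx2
  have h0int : (0:EuclideanSpace ℝ (Fin q))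
      ∈ interior {t : EuclideanSpace ℝ (Fin q) | g 0 / 25 ^ q ≤ g t} := by
    have h2 := hconv.interior hx hnegx (by norm_num : (0:ℝ) ≤ 1/2)
      (by norm_num : (0:ℝ) ≤ 1/2) (by norm_num : (1:ℝ)/2 + 1/2 = 1)
    have : (1/2 : ℝ) • x + (1/2 : ℝ) • (-x) = 0 := by
      rw [smul_neg]
      exact add_neg_cancel _
    rwa [this] at h2
  have habs : Absorbent ℝ {t : EuclideanSpace ℝ (Fin q) | g 0 / 25 ^ q ≤ g t} :=
    absorbent_nhds_zero (mem_interior_iff_mem_nhds.1 h0int)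
  -- the key subset
  have hsubA : {ω | gauge {t : EuclideanSpace ℝ (Fin q) | g 0 / 25 ^ q ≤ g t} (Y ω) ≤ 1 / 50}
      ⊆ Y ⁻¹' ((25⁻¹:ℝ) • {t : EuclideanSpace ℝ (Fin q) | g 0 / 25 ^ q ≤ g t}) := by
    intro ω hω
    obtain ⟨b, hb0, hblt, hbmem⟩ :=
      exists_lt_of_gauge_lt habs (lt_of_le_of_lt hω (by norm_num : (1:ℝ)/50 < 25⁻¹))
    obtain ⟨k, hk, hbk0⟩ := hbmem
    have hbk : b • k = Y ω := hbk0
    refine Set.mem_preimage.2 ⟨(25*b) • k, ?_, ?_⟩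
    · exact hconv.smul_mem_of_zero_mem h0K hk ⟨by positivity, by nlinarith⟩
    · show (25⁻¹:ℝ) • ((25*b) • k) = Y ω
      rw [smul_smul, show (25⁻¹:ℝ) * (25*b) = b by ring, hbk]
  have hAmeas : MeasurableSet
      ((25⁻¹:ℝ) • {t : EuclideanSpace ℝ (Fin q) | g 0 / 25 ^ q ≤ g t}) :=
    hKmeas.const_smul₀ (25⁻¹:ℝ)
  -- on 2⁻¹ • K the density is at least g 0 / 5^q
  have h5 : (0:ℝ) < 5 ^ q := by positivity
  have hhalf : ∀ t ∈ (2⁻¹:ℝ) • {t : EuclideanSpace ℝ (Fin q) | g 0 / 25 ^ q ≤ g t},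
      g 0 / 5 ^ q ≤ g t := by
    rintro _ ⟨s, hs, rfl⟩
    have hlc := hglc 0 s 2⁻¹ (by norm_num) (by norm_num)
    rw [smul_zero, zero_add] at hlc
    have h12 : (1:ℝ) - 2⁻¹ = 2⁻¹ := by norm_num
    rw [h12] at hlc
    have h1 : (g 0 / 25 ^ q) ^ (2⁻¹:ℝ) ≤ g s ^ (2⁻¹:ℝ) :=
      Real.rpow_le_rpow hc25.le hs (by norm_num)
    have h2 : g 0 ^ (2⁻¹:ℝ) * (g 0 / 25 ^ q) ^ (2⁻¹:ℝ) = g 0 / 5 ^ q := by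
      rw [← Real.mul_rpow hc.le hc25.le]
      have hmul : g 0 * (g 0 / 25 ^ q) = (g 0 / 5 ^ q) ^ 2 := by
        have h55 : ((5:ℝ) ^ q) ^ 2 = 25 ^ q := by
          rw [← pow_mul, mul_comm, pow_mul]
          norm_num
        rw [div_pow, h55]
        ring
      rw [hmul, ← Real.rpow_natCast (g 0 / 5 ^ q) 2,
        ← Real.rpow_mul (div_nonneg hc.le h5.le)]
      norm_num
    calc g 0 / 5 ^ q = g 0 ^ (2⁻¹:ℝ) * (g 0 / 25 ^ q) ^ (2⁻¹:ℝ) := h2.symm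
      _ ≤ g 0 ^ (2⁻¹:ℝ) * g s ^ (2⁻¹:ℝ) :=
          mul_le_mul_of_nonneg_left h1 (Real.rpow_nonneg hc.le _)
      _ ≤ g (2⁻¹ • s) := hlc
  -- the key volume bound : g0 * vol K ≤ 10^q
  have h10 : ENNReal.ofReal (g 0) * volume {t : EuclideanSpace ℝ (Fin q) | g 0 / 25 ^ q ≤ g t}
      ≤ ENNReal.ofReal ((10:ℝ) ^ q) := by
    have h1 : ENNReal.ofReal (g 0 / 5 ^ q)
        * volume ((2⁻¹:ℝ) • {t : EuclideanSpace ℝ (Fin q) | g 0 / 25 ^ q ≤ g t}) ≤ 1 := by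
      calc ENNReal.ofReal (g 0 / 5 ^ q)
          * volume ((2⁻¹:ℝ) • {t : EuclideanSpace ℝ (Fin q) | g 0 / 25 ^ q ≤ g t})
          = ∫⁻ _ in (2⁻¹:ℝ) • {t : EuclideanSpace ℝ (Fin q) | g 0 / 25 ^ q ≤ g t},
              ENNReal.ofReal (g 0 / 5 ^ q) := (setLIntegral_const _ _).symm
        _ ≤ ∫⁻ t in (2⁻¹:ℝ) • {t : EuclideanSpace ℝ (Fin q) | g 0 / 25 ^ q ≤ g t},
              ENNReal.ofReal (g t) := by
            apply setLIntegral_mono (hgmeas.ennreal_ofReal)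
            intro t ht
            exact ENNReal.ofReal_le_ofReal (hhalf t ht)
        _ ≤ ∫⁻ t, ENNReal.ofReal (g t) := setLIntegral_le_lintegral _ _
        _ = 1 := hlint
    rw [Measure.addHaar_smul_of_nonneg volume (by norm_num : (0:ℝ) ≤ 2⁻¹),
      finrank_euclideanSpace_fin, ← mul_assoc,
      ← ENNReal.ofReal_mul (div_nonneg hc.le h5.le)] at h1
    have h52 : ((5:ℝ)) ^ q * 2 ^ q = 10 ^ q := by
      rw [← mul_pow]; norm_num
    have hcc : g 0 / 5 ^ q * (2⁻¹:ℝ) ^ q = g 0 / 10 ^ q := by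
      rw [inv_pow, ← h52]
      field_simp
    rw [hcc] at h1
    have hrw : ENNReal.ofReal (g 0)
        * volume {t : EuclideanSpace ℝ (Fin q) | g 0 / 25 ^ q ≤ g t}
        = ENNReal.ofReal ((10:ℝ) ^ q)
          * (ENNReal.ofReal (g 0 / 10 ^ q)
            * volume {t : EuclideanSpace ℝ (Fin q) | g 0 / 25 ^ q ≤ g t}) := by
      rw [← mul_assoc, ← ENNReal.ofReal_mul (by positivity)]
      congr 2
      field_simp
    rw [hrw]
    calc ENNReal.ofReal ((10:ℝ) ^ q)
        * (ENNReal.ofReal (g 0 / 10 ^ q)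
          * volume {t : EuclideanSpace ℝ (Fin q) | g 0 / 25 ^ q ≤ g t})
        ≤ ENNReal.ofReal ((10:ℝ) ^ q) * 1 := mul_le_mul_right h1 _
      _ = ENNReal.ofReal ((10:ℝ) ^ q) := mul_one _
  -- final computation
  calc P {ω | gauge {t : EuclideanSpace ℝ (Fin q) | g 0 / 25 ^ q ≤ g t} (Y ω) ≤ 1 / 50}
      ≤ P (Y ⁻¹' ((25⁻¹:ℝ) • {t : EuclideanSpace ℝ (Fin q) | g 0 / 25 ^ q ≤ g t})) :=
        measure_mono hsubA
    _ = (Measure.map Y P) ((25⁻¹:ℝ) • {t : EuclideanSpace ℝ (Fin q) | g 0 / 25 ^ q ≤ g t}) :=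
        (Measure.map_apply hY hAmeas).symm
    _ = ∫⁻ t in (25⁻¹:ℝ) • {t : EuclideanSpace ℝ (Fin q) | g 0 / 25 ^ q ≤ g t},
          ENNReal.ofReal (g t) := by
        rw [hlaw, withDensity_apply _ hAmeas]
    _ ≤ ∫⁻ _ in (25⁻¹:ℝ) • {t : EuclideanSpace ℝ (Fin q) | g 0 / 25 ^ q ≤ g t},
          ENNReal.ofReal (g 0) := by
        apply setLIntegral_mono measurable_const
        intro t _
        exact ENNReal.ofReal_le_ofReal (hgmax t)
    _ = ENNReal.ofReal (g 0)
          * volume ((25⁻¹:ℝ) • {t : EuclideanSpace ℝ (Fin q) | g 0 / 25 ^ q ≤ g t}) :=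
        setLIntegral_const _ _
    _ = ENNReal.ofReal ((25⁻¹:ℝ) ^ q)
          * (ENNReal.ofReal (g 0)
            * volume {t : EuclideanSpace ℝ (Fin q) | g 0 / 25 ^ q ≤ g t}) := by
        rw [Measure.addHaar_smul_of_nonneg volume (by norm_num : (0:ℝ) ≤ 25⁻¹),
          finrank_euclideanSpace_fin]
        ring
    _ ≤ ENNReal.ofReal ((25⁻¹:ℝ) ^ q) * ENNReal.ofReal ((10:ℝ) ^ q) :=
        mul_le_mul_right h10 _
    _ = ENNReal.ofReal ((2/5:ℝ) ^ q) := by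
        rw [← ENNReal.ofReal_mul (by positivity), ← mul_pow]
        norm_num
    _ ≤ 2⁻¹ ^ q := by
        rw [ENNReal.ofReal_pow (by norm_num)]
        apply pow_le_pow_left₀ (zero_le)
        have h1 : ENNReal.ofReal (2/5:ℝ) ≤ ENNReal.ofReal (2⁻¹:ℝ) :=
          ENNReal.ofReal_le_ofReal (by norm_num)
        rwa [ENNReal.ofReal_inv_of_pos (by norm_num), ENNReal.ofReal_ofNat] at h1
end
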